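/- Let α be a positive root and β a simple root in a crystallographic root system. Then s_α · s_β = s_β · s_α (Hecke product) if and only if (α, β) ≥ 0. -/

import Mathlib

open scoped RealInnerProductSpace

noncomputable section

variable {V : Type*} [NormedAddCommGroup V] [InnerProductSpace ℝ V]

/-- The reflection in a vector `α`: `γ ↦ γ − (2⟪α,γ⟫/⟪α,α⟫)·α` (identity if `α = 0`). -/
def reflE (α : V) : V ≃ₗ[ℝ] V :=
  if h : ⟪α, α⟫ = (0 : ℝ) then LinearEquiv.refl ℝ V
  else
    Module.reflection (f := (2 / ⟪α, α⟫) • ((innerSL ℝ α).toLinearMap)) (x := α)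
      (by
        simp only [LinearMap.smul_apply, ContinuousLinearMap.coe_coe, innerSL_apply_apply,
          smul_eq_mul]
        field_simp)

/-- Data of a (crystallographic) root system, realized in a real inner product space,
together with a choice of simple roots. -/
structure RootSystemData (V : Type*) [NormedAddCommGroup V] [InnerProductSpace ℝ V] where
  /-- the set of roots -/
  R : Finset V
  /-- the simple roots -/
  Δ : Finset V
  ne_zero : ∀ α ∈ R, α ≠ 0
  simple_mem : ∀ β ∈ Δ, β ∈ R
  indep : LinearIndependent ℝ (fun β : Δ => (β : V))
  crystal : ∀ α ∈ R, ∀ γ ∈ R, ∃ n : ℤ, 2 * ⟪γ, α⟫ / ⟪α, α⟫ = (n : ℝ)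
  refl_mem : ∀ α ∈ R, ∀ γ ∈ R, reflE α γ ∈ R
  pos_or_neg : ∀ α ∈ R,
    (∃ c : V → ℝ, (∀ v, 0 ≤ c v) ∧ α = ∑ β ∈ Δ, c β • β) ∨
    (∃ c : V → ℝ, (∀ v, 0 ≤ c v) ∧ -α = ∑ β ∈ Δ, c β • β)

/-- the coroot `α∨ = 2α/(α,α)` -/
def coroot (α : V) : V := (2 / ⟪α, α⟫) • α

namespace RootSystemData

variable (rs : RootSystemData V)

/-- positive roots -/
def IsPos (α : V) : Prop :=
  α ∈ rs.R ∧ ∃ c : V → ℝ, (∀ v, 0 ≤ c v) ∧ α = ∑ β ∈ rs.Δ, c β • β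

/-- the partial order on the root lattice: `y − x` is a nonnegative combination of
the simple roots -/
def rootLE (x y : V) : Prop :=
  ∃ c : V → ℝ, (∀ v, 0 ≤ c v) ∧ y - x = ∑ β ∈ rs.Δ, c β • β

/-- the partial order on degrees: `y − x` is a nonnegative combination of the
simple coroots -/
def corootLE (x y : V) : Prop :=
  ∃ c : V → ℝ, (∀ v, 0 ≤ c v) ∧ y - x = ∑ β ∈ rs.Δ, c β • coroot β

/-- an effective degree -/
def Effective (d : V) : Prop := rs.corootLE 0 d

/-- `α` is a maximal root of the degree `d`, i.e. a maximal element of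
`{γ ∈ R⁺ : γ∨ ≤ d}` -/
def IsMaxRoot (d α : V) : Prop :=
  rs.IsPos α ∧ rs.corootLE (coroot α) d ∧
    ∀ γ, rs.IsPos γ → rs.corootLE (coroot γ) d → rs.rootLE α γ → γ = α

/-- a cosmall root: a maximal root of its own coroot degree -/
def IsCosmall (α : V) : Prop := rs.IsMaxRoot (coroot α) α

/-- the length of a Weyl group element: the number of positive roots sent to
negative roots -/
def len (w : V ≃ₗ[ℝ] V) : ℕ := Set.ncard {γ | rs.IsPos γ ∧ ¬ rs.IsPos (w γ)}

/-- the Bruhat order on the Weyl group -/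
def bruhatLE (x y : V ≃ₗ[ℝ] V) : Prop :=
  Relation.ReflTransGen
    (fun a b => ∃ α ∈ rs.R, b = a * reflE α ∧ rs.len a < rs.len b) x y

/-- the support of a root: the simple roots below it -/
def supp (α : V) : Set V := {β | β ∈ rs.Δ ∧ rs.rootLE β α}

/-- two roots are separated if every simple root in the support of one is
perpendicular to every simple root in the support of the other -/
def Separated (α β : V) : Prop :=
  ∀ x ∈ rs.supp α, ∀ y ∈ rs.supp β, ⟪x, y⟫ = (0 : ℝ)

end RootSystemData

/-- greedy decompositions of an effective degree -/
inductive RootSystemData.Greedy (rs : RootSystemData V) : V → List V → Prop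
  | nil : rs.Greedy 0 []
  | cons {d α l} : rs.IsMaxRoot d α → rs.Greedy (d - coroot α) l →
      rs.Greedy d (α :: l)

/-- The Hecke product on the Weyl group, given axiomatically: it is associative,
unital, and is given on simple reflections by the usual Demazure recipe. -/
structure HeckeData (rs : RootSystemData V) where
  hmul : (V ≃ₗ[ℝ] V) → (V ≃ₗ[ℝ] V) → (V ≃ₗ[ℝ] V)
  hmul_assoc : ∀ u v w, hmul (hmul u v) w = hmul u (hmul v w)
  one_hmul : ∀ u, hmul 1 u = u
  hmul_one : ∀ u, hmul u 1 = u
  hmul_simple : ∀ u (β : V), β ∈ rs.Δ →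
    hmul u (reflE β) =
      if rs.len u < rs.len (u * reflE β) then u * reflE β else u

/-- the Hecke product `s_{α₁} · s_{α₂} · … · s_{α_k}` of the reflections in a list
of roots -/
def HeckeData.zOf {rs : RootSystemData V} (H : HeckeData rs) (l : List V) :
    (V ≃ₗ[ℝ] V) :=
  l.foldl (fun w α => H.hmul w (reflE α)) 1

end

section ReflBasics

variable {V : Type*} [NormedAddCommGroup V] [InnerProductSpace ℝ V]

lemma reflE_apply {α : V} (h : ⟪α, α⟫ ≠ (0:ℝ)) (x : V) :
    reflE α x = x - (2 / ⟪α, α⟫ * ⟪α, x⟫) • α := by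
  rw [reflE, dif_neg h, Module.reflection_apply]
  simp

lemma reflE_involutive (α : V) : Function.Involutive (reflE α) := by
  rw [reflE]
  split
  · intro x; rfl
  · exact Module.involutive_reflection _

lemma reflE_symm (α : V) : (reflE α).symm = reflE α := by
  ext x
  rw [LinearEquiv.symm_apply_eq]
  exact (reflE_involutive α x).symm

lemma reflE_mul_self (α : V) : reflE α * reflE α = 1 := by
  ext x
  exact reflE_involutive α x

lemma reflE_self {α : V} (h : ⟪α, α⟫ ≠ (0:ℝ)) : reflE α α = -α := by
  rw [reflE_apply h]
  rw [div_mul_cancel₀ _ h]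
  module

lemma reflE_inner (α : V) (x y : V) : ⟪reflE α x, reflE α y⟫ = ⟪x, y⟫ := by
  by_cases h : ⟪α, α⟫ = (0:ℝ)
  · rw [reflE, dif_pos h]; rfl
  · rw [reflE_apply h, reflE_apply h]
    simp only [inner_sub_left, inner_sub_right, real_inner_smul_left, real_inner_smul_right]
    rw [real_inner_comm x α]
    field_simp
    ring

lemma reflE_smul {α : V} (t : ℝ) (ht : t ≠ 0) (h : ⟪α, α⟫ ≠ (0:ℝ)) :
    reflE (t • α) = reflE α := by
  have h2 : ⟪t • α, t • α⟫ ≠ (0:ℝ) := by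
    rw [real_inner_smul_left, real_inner_smul_right]
    exact mul_ne_zero ht (mul_ne_zero ht h)
  ext x
  rw [reflE_apply h, reflE_apply h2]
  rw [real_inner_smul_left, real_inner_smul_right, real_inner_smul_left, smul_smul]
  congr 2
  field_simp

lemma reflE_conj {u : V ≃ₗ[ℝ] V} (hu : ∀ x y, ⟪u x, u y⟫ = ⟪x, y⟫) (α : V) :
    reflE (u α) = u * reflE α * u.symm := by
  by_cases h : ⟪α, α⟫ = (0:ℝ)
  · have h2 : ⟪u α, u α⟫ = (0:ℝ) := by rw [hu]; exact h
    ext x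
    rw [reflE, dif_pos h2, reflE, dif_pos h]
    show x = u (u.symm x)
    simp
  · have h2 : ⟪u α, u α⟫ ≠ (0:ℝ) := by rw [hu]; exact h
    ext x
    show reflE (u α) x = u (reflE α (u.symm x))
    rw [reflE_apply h2, reflE_apply h, map_sub, map_smul, u.apply_symm_apply]
    have e1 : ⟪u α, x⟫ = ⟪α, u.symm x⟫ := by
      conv_lhs => rw [← u.apply_symm_apply x, hu]
    rw [e1, hu]

lemma reflE_conj' {u : V ≃ₗ[ℝ] V} (hu : ∀ x y, ⟪u x, u y⟫ = ⟪x, y⟫) (α : V) :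
    u * reflE α = reflE (u α) * u := by
  rw [reflE_conj hu]
  ext x
  show u (reflE α x) = u (reflE α (u.symm (u x)))
  rw [u.symm_apply_apply]

lemma real_inner_self_pos' {x : V} (h : x ≠ 0) : (0:ℝ) < ⟪x, x⟫ := by
  have h1 : (0:ℝ) ≤ ⟪x, x⟫ := real_inner_self_nonneg
  have h2 : (⟪x, x⟫:ℝ) ≠ 0 := by
    simpa [inner_self_eq_zero] using h
  exact h1.lt_of_ne (Ne.symm h2)

end ReflBasics
namespace RootSystemData

attribute [local instance] Classical.propDecidable

variable {V : Type*} [NormedAddCommGroup V] [InnerProductSpace ℝ V] (rs : RootSystemData V)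

lemma coeff_zero {f : V → ℝ} (hf : ∑ β ∈ rs.Δ, f β • β = 0) : ∀ β ∈ rs.Δ, f β = 0 := by
  intro β hβ
  have h := (Fintype.linearIndependent_iff.mp rs.indep) (fun i => f i)
    (by rw [← hf, ← Finset.sum_coe_sort rs.Δ (fun β => f β • β)]) ⟨β, hβ⟩
  exact h

lemma coeff_unique {f g : V → ℝ}
    (hfg : ∑ β ∈ rs.Δ, f β • β = ∑ β ∈ rs.Δ, g β • β) : ∀ β ∈ rs.Δ, f β = g β := by
  intro β hβ
  have h : ∑ β ∈ rs.Δ, (f β - g β) • β = 0 := by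
    simp only [sub_smul, Finset.sum_sub_distrib, hfg, sub_self]
  have := rs.coeff_zero h β hβ
  linarith

lemma inner_self_ne {α : V} (hα : α ∈ rs.R) : ⟪α, α⟫ ≠ (0:ℝ) := by
  simpa [inner_self_eq_zero] using rs.ne_zero α hα

lemma neg_mem {α : V} (hα : α ∈ rs.R) : -α ∈ rs.R := by
  have := rs.refl_mem α hα α hα
  rwa [reflE_self (rs.inner_self_ne hα)] at this

lemma not_pos_and_neg {α : V} (h1 : rs.IsPos α) (h2 : rs.IsPos (-α)) : False := by
  obtain ⟨hm, c, hc0, hc⟩ := h1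
  obtain ⟨hm2, d, hd0, hd⟩ := h2
  have hsum : ∑ β ∈ rs.Δ, (c β + d β) • β = 0 := by
    simp only [add_smul, Finset.sum_add_distrib, ← hc, ← hd, add_neg_cancel]
  have hz : ∀ β ∈ rs.Δ, c β = 0 := by
    intro β hβ
    have := rs.coeff_zero hsum β hβ
    have := hc0 β; have := hd0 β
    linarith
  apply rs.ne_zero α hm
  rw [hc]
  exact Finset.sum_eq_zero (fun β hβ => by rw [hz β hβ, zero_smul])

lemma pos_or_negpos {α : V} (hα : α ∈ rs.R) : rs.IsPos α ∨ rs.IsPos (-α) := by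
  rcases rs.pos_or_neg α hα with h | h
  · exact Or.inl ⟨hα, h⟩
  · exact Or.inr ⟨rs.neg_mem hα, h⟩

lemma not_isPos_iff {α : V} (hα : α ∈ rs.R) : ¬ rs.IsPos α ↔ rs.IsPos (-α) := by
  constructor
  · intro h; exact (rs.pos_or_negpos hα).resolve_left h
  · intro h h'; exact rs.not_pos_and_neg h' h

lemma isPos_smul {α : V} {t : ℝ} (hα : rs.IsPos α) (ht : 0 < t) (hm : t • α ∈ rs.R) :
    rs.IsPos (t • α) := by
  obtain ⟨_, c, hc0, hc⟩ := hα
  refine ⟨hm, fun v => t * c v, fun v => mul_nonneg ht.le (hc0 v), ?_⟩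
  rw [hc, Finset.smul_sum]
  simp [smul_smul]

lemma isPos_of_coeff_pos {α : V} (hR : α ∈ rs.R) {c : V → ℝ}
    (hc : α = ∑ β ∈ rs.Δ, c β • β) {δ : V} (hδ : δ ∈ rs.Δ) (hpos : 0 < c δ) :
    rs.IsPos α := by
  rcases rs.pos_or_negpos hR with h | h
  · exact h
  · exfalso
    obtain ⟨_, d, hd0, hd⟩ := h
    have hsum : ∑ β ∈ rs.Δ, (c β + d β) • β = 0 := by
      simp only [add_smul, Finset.sum_add_distrib, ← hc, ← hd, add_neg_cancel]
    have := rs.coeff_zero hsum δ hδ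
    have := hd0 δ
    linarith

lemma not_isPos_of_coeff_neg {α : V} {c : V → ℝ}
    (hc : α = ∑ β ∈ rs.Δ, c β • β) {δ : V} (hδ : δ ∈ rs.Δ) (hneg : c δ < 0) :
    ¬ rs.IsPos α := by
  rintro ⟨_, d, hd0, hd⟩
  have := rs.coeff_unique (hd.symm.trans hc) δ hδ
  have := hd0 δ
  linarith

lemma isPos_simple {β : V} (hβ : β ∈ rs.Δ) : rs.IsPos β := by
  refine ⟨rs.simple_mem β hβ, fun v => if v = β then 1 else 0,
    fun v => by positivity, ?_⟩
  simp [ite_smul, Finset.sum_ite_eq', hβ]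

lemma sum_sub_single (c : V → ℝ) (k : ℝ) {γ : V} (hγ : γ ∈ rs.Δ) :
    (∑ β ∈ rs.Δ, c β • β) - k • γ
      = ∑ β ∈ rs.Δ, (c β - if β = γ then k else 0) • β := by
  simp only [sub_smul, Finset.sum_sub_distrib]
  congr 1
  simp [ite_smul, Finset.sum_ite_eq', hγ]

lemma exists_other_coeff {α γ : V} (hγ : γ ∈ rs.Δ) {c : V → ℝ} (hc0 : ∀ v, 0 ≤ c v)
    (hc : α = ∑ β ∈ rs.Δ, c β • β) (hnp : ∀ t : ℝ, α ≠ t • γ) :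
    ∃ δ ∈ rs.Δ, δ ≠ γ ∧ 0 < c δ := by
  by_contra hcon
  push_neg at hcon
  apply hnp (c γ)
  rw [hc]
  rw [Finset.sum_eq_single_of_mem γ hγ]
  intro b hb hbne
  have hble : c b ≤ 0 := hcon b hb hbne
  have : 0 ≤ c b := hc0 b
  have hb0 : c b = 0 := le_antisymm ‹c b ≤ 0› ‹0 ≤ c b›
  rw [hb0, zero_smul]

/-- the reflection coefficient -/
lemma reflE_apply_root {γ : V} (hγ : γ ∈ rs.R) (x : V) :
    reflE γ x = x - (2 / ⟪γ, γ⟫ * ⟪γ, x⟫) • γ :=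
  reflE_apply (rs.inner_self_ne hγ) x

lemma isPos_reflE_simple {γ α : V} (hγ : γ ∈ rs.Δ) (hα : rs.IsPos α)
    (hnp : ∀ t : ℝ, α ≠ t • γ) : rs.IsPos (reflE γ α) := by
  have hγR := rs.simple_mem γ hγ
  have hmem : reflE γ α ∈ rs.R := rs.refl_mem γ hγR α hα.1
  obtain ⟨hm, c, hc0, hc⟩ := hα
  obtain ⟨δ, hδ, hδne, hδpos⟩ := rs.exists_other_coeff hγ hc0 hc hnp
  have happ : reflE γ α = ∑ β ∈ rs.Δ, (c β - if β = γ then (2 / ⟪γ, γ⟫ * ⟪γ, α⟫) else 0) • β := by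
    rw [rs.reflE_apply_root hγR, hc, rs.sum_sub_single c _ hγ, ← hc]
  exact rs.isPos_of_coeff_pos hmem happ hδ (by rw [if_neg hδne]; simpa using hδpos)

lemma smul_pos_of_pos {α γ : V} {t : ℝ} (hα : rs.IsPos α) (hγ : rs.IsPos γ)
    (h : α = t • γ) : 0 < t := by
  rcases lt_trichotomy t 0 with ht | ht | ht
  · exfalso
    have hmem : (-t) • γ ∈ rs.R := by
      have : (-t) • γ = -α := by rw [h, ← neg_smul]
      rw [this]
      exact rs.neg_mem hα.1
    have hpos : rs.IsPos ((-t) • γ) := rs.isPos_smul hγ (by linarith) hmem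
    have : (-t) • γ = -α := by rw [h, ← neg_smul]
    rw [this] at hpos
    exact rs.not_pos_and_neg hα hpos
  · exfalso; apply rs.ne_zero α hα.1; rw [h, ht, zero_smul]
  · exact ht

end RootSystemData
namespace RootSystemData

variable {V : Type*} [NormedAddCommGroup V] [InnerProductSpace ℝ V] (rs : RootSystemData V)

/-- an automorphism preserving the roots and the inner product -/
def Nice (w : V ≃ₗ[ℝ] V) : Prop :=
  (∀ γ ∈ rs.R, w γ ∈ rs.R) ∧ (∀ γ ∈ rs.R, w.symm γ ∈ rs.R) ∧
    (∀ x y, ⟪w x, w y⟫ = ⟪x, y⟫)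

lemma nice_one : rs.Nice 1 :=
  ⟨fun γ hγ => hγ, fun γ hγ => hγ, fun _ _ => rfl⟩

lemma nice_reflE {α : V} (hα : α ∈ rs.R) : rs.Nice (reflE α) := by
  refine ⟨fun γ hγ => rs.refl_mem α hα γ hγ, ?_, reflE_inner α⟩
  rw [reflE_symm]
  exact fun γ hγ => rs.refl_mem α hα γ hγ

lemma mul_symm_apply (u v : V ≃ₗ[ℝ] V) (x : V) : (u * v).symm x = v.symm (u.symm x) := by
  rw [LinearEquiv.symm_apply_eq]
  show x = u (v (v.symm (u.symm x)))
  simp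

lemma nice_mul {u v : V ≃ₗ[ℝ] V} (hu : rs.Nice u) (hv : rs.Nice v) : rs.Nice (u * v) := by
  refine ⟨fun γ hγ => hu.1 _ (hv.1 γ hγ), fun γ hγ => ?_, fun x y => ?_⟩
  · rw [mul_symm_apply]
    exact hv.2.1 _ (hu.2.1 γ hγ)
  · show ⟪u (v x), u (v y)⟫ = ⟪x, y⟫
    rw [hu.2.2, hv.2.2]

lemma inv_subset (w : V ≃ₗ[ℝ] V) :
    {γ | rs.IsPos γ ∧ ¬ rs.IsPos (w γ)} ⊆ ↑rs.R := fun γ h => h.1.1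

lemma inv_finite (w : V ≃ₗ[ℝ] V) :
    {γ | rs.IsPos γ ∧ ¬ rs.IsPos (w γ)}.Finite :=
  Set.Finite.subset rs.R.finite_toSet (rs.inv_subset w)

lemma len_one : rs.len 1 = 0 := by
  rw [len]
  convert Set.ncard_empty V using 2
  ext γ
  simp only [Set.mem_setOf_eq, Set.mem_empty_iff_false, iff_false]
  rintro ⟨h1, h2⟩
  exact h2 h1

lemma len_lt_of_pos {u : V ≃ₗ[ℝ] V} {γ : V} (hu : rs.Nice u) (hγ : γ ∈ rs.Δ)
    (hpos : rs.IsPos (u γ)) : rs.len u < rs.len (u * reflE γ) := by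
  have hγR := rs.simple_mem γ hγ
  have hγpos := rs.isPos_simple hγ
  set A := {δ | rs.IsPos δ ∧ ¬ rs.IsPos (u δ)} with hA
  set B := {δ | rs.IsPos δ ∧ ¬ rs.IsPos ((u * reflE γ) δ)} with hB
  have hsub : reflE γ '' A ⊆ B := by
    rintro _ ⟨δ, ⟨hδpos, hδneg⟩, rfl⟩
    have hδnp : ∀ t : ℝ, δ ≠ t • γ := by
      intro t ht
      have ht' : 0 < t := rs.smul_pos_of_pos hδpos hγpos ht
      apply hδneg
      have : u δ = t • u γ := by rw [ht, map_smul]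
      rw [this]
      exact rs.isPos_smul hpos ht' (by rw [← this]; exact hu.1 δ hδpos.1)
    refine ⟨rs.isPos_reflE_simple hγ hδpos hδnp, ?_⟩
    have : (u * reflE γ) (reflE γ δ) = u δ := by
      show u (reflE γ (reflE γ δ)) = u δ
      rw [reflE_involutive]
    rw [this]
    exact hδneg
  have hγB : γ ∈ B := by
    refine ⟨hγpos, ?_⟩
    have : (u * reflE γ) γ = -(u γ) := by
      show u (reflE γ γ) = -(u γ)
      rw [reflE_self (rs.inner_self_ne hγR), map_neg]
    rw [this]
    intro h
    exact rs.not_pos_and_neg hpos h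
  have hγnot : γ ∉ reflE γ '' A := by
    rintro ⟨δ, ⟨hδpos, _⟩, hδeq⟩
    have : δ = -γ := by
      have := congrArg (reflE γ) hδeq
      rwa [reflE_involutive, reflE_self (rs.inner_self_ne hγR)] at this
    rw [this] at hδpos
    exact rs.not_pos_and_neg hγpos hδpos
  have hss : reflE γ '' A ⊂ B := (Set.ssubset_iff_of_subset hsub).mpr ⟨γ, hγB, hγnot⟩
  have hcard : (reflE γ '' A).ncard = A.ncard :=
    Set.ncard_image_of_injective A (reflE γ).injective
  rw [len, len, ← hA, ← hB, ← hcard]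
  exact Set.ncard_lt_ncard hss (rs.inv_finite _)

lemma len_iff {u : V ≃ₗ[ℝ] V} {γ : V} (hu : rs.Nice u) (hγ : γ ∈ rs.Δ) :
    rs.len u < rs.len (u * reflE γ) ↔ rs.IsPos (u γ) := by
  constructor
  · intro hlt
    by_contra hneg
    have hγR := rs.simple_mem γ hγ
    have huγR : u γ ∈ rs.R := hu.1 γ hγR
    have hneg' : rs.IsPos (-(u γ)) := (rs.not_isPos_iff huγR).mp hneg
    have h2 : rs.IsPos ((u * reflE γ) γ) := by
      have : (u * reflE γ) γ = -(u γ) := by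
        show u (reflE γ γ) = -(u γ)
        rw [reflE_self (rs.inner_self_ne hγR), map_neg]
      rw [this]; exact hneg'
    have := rs.len_lt_of_pos (rs.nice_mul hu (rs.nice_reflE hγR)) hγ h2
    rw [mul_assoc, reflE_mul_self, mul_one] at this
    omega
  · exact rs.len_lt_of_pos hu hγ

lemma hmul_eval (H : HeckeData rs) {u : V ≃ₗ[ℝ] V} {γ : V} (hu : rs.Nice u)
    (hγ : γ ∈ rs.Δ) :
    (rs.IsPos (u γ) → H.hmul u (reflE γ) = u * reflE γ) ∧
    (¬ rs.IsPos (u γ) → H.hmul u (reflE γ) = u) := by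
  constructor <;> intro h <;> rw [H.hmul_simple u γ hγ]
  · rw [if_pos ((rs.len_iff hu hγ).mpr h)]
  · rw [if_neg (fun hl => h ((rs.len_iff hu hγ).mp hl))]

end RootSystemData
namespace RootSystemData

variable {V : Type*} [NormedAddCommGroup V] [InnerProductSpace ℝ V] {rs : RootSystemData V}

lemma zOf_nil (H : HeckeData rs) : H.zOf ([] : List V) = 1 := rfl

lemma zOf_append_singleton (H : HeckeData rs) (l : List V) (γ : V) :
    H.zOf (l ++ [γ]) = H.hmul (H.zOf l) (reflE γ) := by
  rw [HeckeData.zOf, HeckeData.zOf, List.foldl_append]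
  rfl

lemma hmul_zOf (H : HeckeData rs) (l : List V) (u : V ≃ₗ[ℝ] V) :
    H.hmul u (H.zOf l) = l.foldl (fun w α => H.hmul w (reflE α)) u := by
  induction l generalizing u with
  | nil => exact H.hmul_one u
  | cons a l ih =>
    have hz : H.zOf (a :: l) = H.hmul (reflE a) (H.zOf l) := by
      rw [HeckeData.zOf, List.foldl_cons]
      rw [H.one_hmul]
      exact (ih (reflE a)).symm
    rw [hz, ← H.hmul_assoc, List.foldl_cons]
    exact ih _

lemma zOf_cons (H : HeckeData rs) (a : V) (l : List V) :
    H.zOf (a :: l) = H.hmul (reflE a) (H.zOf l) := by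
  rw [HeckeData.zOf, List.foldl_cons, H.one_hmul, hmul_zOf]

lemma nice_zOf (H : HeckeData rs) (l : List V) (hl : ∀ γ ∈ l, γ ∈ rs.Δ) :
    rs.Nice (H.zOf l) := by
  induction l using List.reverseRecOn with
  | nil => exact rs.nice_one
  | append_singleton l γ ih =>
    have hl' : ∀ γ ∈ l, γ ∈ rs.Δ := fun γ hγ => hl γ (by simp [hγ])
    have hγ : γ ∈ rs.Δ := hl γ (by simp)
    have hn := ih hl'
    rw [zOf_append_singleton, H.hmul_simple _ γ hγ]
    split
    · exact rs.nice_mul hn (rs.nice_reflE (rs.simple_mem γ hγ))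
    · exact hn

/-- The key lemma: left Hecke multiplication by a simple reflection. -/
lemma hecke_left_simple (H : HeckeData rs) {β : V} (hβ : β ∈ rs.Δ)
    (l : List V) (hl : ∀ γ ∈ l, γ ∈ rs.Δ) :
    (rs.IsPos ((H.zOf l).symm β) → H.hmul (reflE β) (H.zOf l) = reflE β * H.zOf l) ∧
    (¬ rs.IsPos ((H.zOf l).symm β) → H.hmul (reflE β) (H.zOf l) = H.zOf l) := by
  have hβR := rs.simple_mem β hβ
  have hβpos := rs.isPos_simple hβ
  induction l using List.reverseRecOn with
  | nil =>
    constructor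
    · intro _
      rw [zOf_nil, H.hmul_one, mul_one]
    · intro h
      exact absurd hβpos (by rw [zOf_nil] at h; exact h)
  | append_singleton l γ ih =>
    have hl' : ∀ δ ∈ l, δ ∈ rs.Δ := fun δ hδ => hl δ (by simp [hδ])
    have hγ : γ ∈ rs.Δ := hl γ (by simp)
    have hγR := rs.simple_mem γ hγ
    have hγpos := rs.isPos_simple hγ
    set w := H.zOf l with hw
    have hwn : rs.Nice w := nice_zOf H l hl'
    have ih' := ih hl'
    rw [zOf_append_singleton, ← hw]
    by_cases hwγ : rs.IsPos (w γ)
    · -- zOf (l++[γ]) = w * s_γ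
      have hz : H.hmul w (reflE γ) = w * reflE γ := (rs.hmul_eval H hwn hγ).1 hwγ
      rw [hz]
      have hsymm : (w * reflE γ).symm β = reflE γ (w.symm β) := by
        rw [mul_symm_apply, reflE_symm]
      have hassoc : H.hmul (reflE β) (w * reflE γ)
          = H.hmul (H.hmul (reflE β) w) (reflE γ) := by
        rw [← hz, ← H.hmul_assoc]
      by_cases hwb : rs.IsPos (w.symm β)
      · have hIH : H.hmul (reflE β) w = reflE β * w := ih'.1 hwb
        rw [hassoc, hIH]
        have hbwn : rs.Nice (reflE β * w) := rs.nice_mul (rs.nice_reflE hβR) hwn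
        by_cases hc : rs.IsPos ((reflE β * w) γ)
        · -- LHS = s_β w s_γ ; show RHS condition holds
          rw [(rs.hmul_eval H hbwn hγ).1 hc]
          have hcond : rs.IsPos (reflE γ (w.symm β)) := by
            by_cases hnp : ∀ t : ℝ, w.symm β ≠ t • γ
            · exact rs.isPos_reflE_simple hγ hwb hnp
            · exfalso
              push_neg at hnp
              obtain ⟨t, ht⟩ := hnp
              have htpos : 0 < t := rs.smul_pos_of_pos hwb hγpos ht
              have hwγβ : w γ = t⁻¹ • β := by
                have : β = t • w γ := by
                  conv_lhs => rw [← w.apply_symm_apply β, ht, map_smul]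
                rw [this, smul_smul, inv_mul_cancel₀ htpos.ne', one_smul]
              have : (reflE β * w) γ = -(t⁻¹ • β) := by
                show reflE β (w γ) = -(t⁻¹ • β)
                rw [hwγβ, map_smul, reflE_self (rs.inner_self_ne hβR), smul_neg]
              rw [this] at hc
              have hmem : t⁻¹ • β ∈ rs.R := by
                rw [← hwγβ]; exact hwn.1 γ hγR
              exact rs.not_pos_and_neg (rs.isPos_smul hβpos (by positivity) hmem) hc
          constructor
          · intro _
            rw [mul_assoc]
          · intro h
            rw [hsymm] at h
            exact absurd hcond h
        · -- LHS = s_β w ; w γ ∝ β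
          rw [(rs.hmul_eval H hbwn hγ).2 hc]
          have hprop : ∃ t : ℝ, w γ = t • β := by
            by_contra hnp
            push_neg at hnp
            exact hc (rs.isPos_reflE_simple hβ hwγ hnp)
          obtain ⟨t, ht⟩ := hprop
          have htpos : 0 < t := rs.smul_pos_of_pos hwγ hβpos ht
          have hwsymmβ : w.symm β = t⁻¹ • γ := by
            have : γ = t • w.symm β := by
              conv_lhs => rw [← w.symm_apply_apply γ, ht, map_smul]
            rw [this, smul_smul, inv_mul_cancel₀ htpos.ne', one_smul]
          have hkey : reflE β * w = w * reflE γ := by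
            have h1 : reflE β = reflE (w γ) := by
              rw [ht, reflE_smul t htpos.ne' (rs.inner_self_ne hβR)]
            have h2 : reflE (w γ) = w * reflE γ * w.symm := reflE_conj hwn.2.2 γ
            rw [h1, h2]
            ext x
            show w (reflE γ (w.symm (w x))) = w (reflE γ x)
            rw [w.symm_apply_apply]
          have hcond : ¬ rs.IsPos (reflE γ (w.symm β)) := by
            have : reflE γ (w.symm β) = -(t⁻¹ • γ) := by
              rw [hwsymmβ, map_smul, reflE_self (rs.inner_self_ne hγR), smul_neg]
            rw [this]
            have hmem : t⁻¹ • γ ∈ rs.R := by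
              rw [← hwsymmβ]; exact hwn.2.1 β hβR
            intro h
            exact rs.not_pos_and_neg (rs.isPos_smul hγpos (by positivity) hmem) h
          constructor
          · intro h
            rw [hsymm] at h
            exact absurd h hcond
          · intro _
            exact hkey
      · -- w.symm β negative : hmul s_β w = w
        have hIH : H.hmul (reflE β) w = w := ih'.2 hwb
        rw [hassoc, hIH, hz]
        have hwsymmβR : w.symm β ∈ rs.R := hwn.2.1 β hβR
        have hneg : rs.IsPos (-(w.symm β)) := (rs.not_isPos_iff hwsymmβR).mp hwb
        have hcond : ¬ rs.IsPos (reflE γ (w.symm β)) := by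
          have hnp : ∀ t : ℝ, -(w.symm β) ≠ t • γ := by
            intro t htc
            have htpos : 0 < t := rs.smul_pos_of_pos hneg hγpos htc
            have : -β = t • (w γ) := by
              rw [← map_smul, ← htc, map_neg, w.apply_symm_apply]
            have hmem : t • w γ ∈ rs.R := by rw [← this]; exact rs.neg_mem hβR
            have : rs.IsPos (-β) := this ▸ rs.isPos_smul hwγ htpos hmem
            exact rs.not_pos_and_neg hβpos this
          have : rs.IsPos (reflE γ (-(w.symm β))) := rs.isPos_reflE_simple hγ hneg hnp
          rw [map_neg] at this
          intro h
          exact rs.not_pos_and_neg h this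
        constructor
        · intro h
          rw [hsymm] at h
          exact absurd h hcond
        · intro _
          rfl
    · -- zOf (l++[γ]) = w : reduce to IH
      have hz : H.hmul w (reflE γ) = w := (rs.hmul_eval H hwn hγ).2 hwγ
      rw [hz]
      exact ih'

end RootSystemData
namespace RootSystemData

attribute [local instance] Classical.propDecidable

variable {V : Type*} [NormedAddCommGroup V] [InnerProductSpace ℝ V] (rs : RootSystemData V)

/-- the height of a positive root -/
noncomputable def ht (α : V) : ℝ :=
  if h : rs.IsPos α then ∑ β ∈ rs.Δ, Classical.choose h.2 β else 0

lemma ht_eq {α : V} (h : rs.IsPos α) {c : V → ℝ} (hc : α = ∑ β ∈ rs.Δ, c β • β) :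
    rs.ht α = ∑ β ∈ rs.Δ, c β := by
  rw [ht, dif_pos h]
  apply Finset.sum_congr rfl
  intro β hβ
  exact rs.coeff_unique ((Classical.choose_spec h.2).2.symm.trans hc) β hβ

/-- number of positive roots of smaller height -/
noncomputable def meas (α : V) : ℕ :=
  (rs.R.filter (fun δ => rs.IsPos δ ∧ rs.ht δ < rs.ht α)).card

lemma meas_lt {α α' : V} (h' : rs.IsPos α') (hlt : rs.ht α' < rs.ht α) :
    rs.meas α' < rs.meas α := by
  apply Finset.card_lt_card
  constructor
  · intro δ hδ
    rw [Finset.mem_filter] at hδ ⊢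
    exact ⟨hδ.1, hδ.2.1, hδ.2.2.trans hlt⟩
  · intro hsub
    have : α' ∈ rs.R.filter (fun δ => rs.IsPos δ ∧ rs.ht δ < rs.ht α) := by
      rw [Finset.mem_filter]
      exact ⟨h'.1, h', hlt⟩
    have := hsub this
    rw [Finset.mem_filter] at this
    exact absurd this.2.2 (lt_irrefl _)

lemma exists_inner_pos {α : V} (hα : rs.IsPos α) : ∃ γ ∈ rs.Δ, 0 < ⟪α, γ⟫ := by
  by_contra hcon
  push_neg at hcon
  obtain ⟨hm, c, hc0, hc⟩ := hα
  have hpos : (0:ℝ) < ⟪α, α⟫ :=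
    real_inner_self_pos' (rs.ne_zero α hm)
  have : ⟪α, α⟫ ≤ (0:ℝ) := by
    conv_lhs => rw [show (⟪α, α⟫:ℝ) = ⟪α, ∑ β ∈ rs.Δ, c β • β⟫ by rw [← hc]]
    rw [inner_sum]
    apply Finset.sum_nonpos
    intro β hβ
    rw [real_inner_smul_right]
    exact mul_nonpos_of_nonneg_of_nonpos (hc0 β) (hcon β hβ)
  linarith

lemma exists_word_aux (H : HeckeData rs) :
    ∀ n : ℕ, ∀ α : V, rs.IsPos α → rs.meas α ≤ n →
      ∃ l : List V, (∀ γ ∈ l, γ ∈ rs.Δ) ∧ H.zOf l = reflE α := by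
  intro n
  induction n using Nat.strong_induction_on with
  | _ n IH =>
  intro α hα hn
  by_cases hprop : ∃ δ ∈ rs.Δ, ∃ t : ℝ, α = t • δ
  · obtain ⟨δ, hδ, t, ht⟩ := hprop
    have htpos : 0 < t := rs.smul_pos_of_pos hα (rs.isPos_simple hδ) ht
    refine ⟨[δ], fun x hx => by rw [List.mem_singleton] at hx; subst hx; exact hδ, ?_⟩
    have h1 : H.zOf [δ] = H.hmul 1 (reflE δ) := rfl
    have h2 : (1 : V ≃ₗ[ℝ] V) δ = δ := rfl
    rw [h1, (rs.hmul_eval H rs.nice_one hδ).1 (h2 ▸ rs.isPos_simple hδ), one_mul]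
    rw [ht, reflE_smul t htpos.ne' (rs.inner_self_ne (rs.simple_mem δ hδ))]
  · push_neg at hprop
    obtain ⟨γ, hγ, hinner⟩ := rs.exists_inner_pos hα
    have hγR := rs.simple_mem γ hγ
    have hγpos := rs.isPos_simple hγ
    have hαR := hα.1
    have hαα : (0:ℝ) < ⟪α, α⟫ := real_inner_self_pos' (rs.ne_zero α hαR)
    have hγγ : (0:ℝ) < ⟪γ, γ⟫ := real_inner_self_pos' (rs.ne_zero γ hγR)
    have hnp : ∀ t : ℝ, α ≠ t • γ := fun t => hprop γ hγ t
    set k : ℝ := 2 / ⟪γ, γ⟫ * ⟪γ, α⟫ with hk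
    have hkpos : 0 < k := by
      have h2 : (0:ℝ) < ⟪γ, α⟫ := by rw [real_inner_comm]; exact hinner
      exact mul_pos (div_pos two_pos hγγ) h2
    set α' : V := reflE γ α with hα'
    have hα'eq : α' = α - k • γ := rs.reflE_apply_root hγR α
    have hα'pos : rs.IsPos α' := rs.isPos_reflE_simple hγ hα hnp
    -- height decreases
    obtain ⟨hm, c, hc0, hc⟩ := hα
    have hrep : α' = ∑ β ∈ rs.Δ, (c β - if β = γ then k else 0) • β := by
      rw [hα'eq, hc, rs.sum_sub_single c k hγ]
    have hht : rs.ht α' = rs.ht α - k := by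
      rw [rs.ht_eq hα'pos hrep, rs.ht_eq ⟨hm, c, hc0, hc⟩ hc]
      rw [Finset.sum_sub_distrib]
      congr 1
      rw [Finset.sum_ite_eq' rs.Δ γ (fun _ => k), if_pos hγ]
    have hmeas : rs.meas α' < rs.meas α := rs.meas_lt hα'pos (by rw [hht]; linarith)
    obtain ⟨l', hl', hz'⟩ := IH (rs.meas α') (lt_of_lt_of_le hmeas hn) α' hα'pos le_rfl
    -- the word
    refine ⟨γ :: l' ++ [γ], ?_, ?_⟩
    · intro δ hδ
      rcases List.mem_cons.mp hδ with h | h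
      · exact h ▸ hγ
      · rcases List.mem_append.mp h with h | h
        · exact hl' δ h
        · rw [List.mem_singleton] at h; subst h; exact hγ
    · -- compute
      set k' : ℝ := 2 / ⟪α, α⟫ * ⟪α, γ⟫ with hk'
      have hk'pos : 0 < k' := mul_pos (div_pos two_pos hαα) hinner
      have hsαγ : reflE α γ = γ - k' • α := rs.reflE_apply_root hαR γ
      -- k' • α - γ is a positive root
      have hmem1 : k' • α - γ ∈ rs.R := by
        have : k' • α - γ = -(reflE α γ) := by rw [hsαγ]; abel
        rw [this]
        exact rs.neg_mem (rs.refl_mem α hαR γ hγR)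
      obtain ⟨δ₀, hδ₀, hδ₀ne, hδ₀pos⟩ := rs.exists_other_coeff hγ hc0 hc hnp
      have hrep2 : k' • α - γ = ∑ β ∈ rs.Δ, (k' * c β - if β = γ then (1:ℝ) else 0) • β := by
        have h1 : k' • α = ∑ β ∈ rs.Δ, (k' * c β) • β := by
          rw [hc, Finset.smul_sum]
          simp [smul_smul]
        calc k' • α - γ = (∑ β ∈ rs.Δ, (k' * c β) • β) - (1:ℝ) • γ := by
              rw [h1, one_smul]
          _ = _ := rs.sum_sub_single _ 1 hγ
      have hpos1 : rs.IsPos (k' • α - γ) := by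
        apply rs.isPos_of_coeff_pos hmem1 hrep2 hδ₀
        rw [if_neg hδ₀ne]
        simp only [sub_zero]
        positivity
      have hnp1 : ∀ t : ℝ, k' • α - γ ≠ t • γ := by
        intro t htc
        apply hprop γ hγ ((t+1)/k')
        have : k' • α = (t+1) • γ := by
          have := htc
          rw [sub_eq_iff_eq_add] at this
          rw [this, add_smul, one_smul]
        rw [div_eq_mul_inv, mul_comm, ← smul_smul]
        rw [← this, smul_smul, inv_mul_cancel₀ hk'pos.ne', one_smul]
      have hpos2 : rs.IsPos (reflE γ (k' • α - γ)) := rs.isPos_reflE_simple hγ hpos1 hnp1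
      -- s_{α'} = s_γ s_α s_γ
      have hconj : reflE α' = reflE γ * reflE α * reflE γ := by
        have := reflE_conj (u := reflE γ) (reflE_inner γ) α
        rw [← hα', reflE_symm] at this
        exact this
      have hsα'γ : reflE α' γ = reflE γ (k' • α - γ) := by
        rw [hconj]
        show reflE γ (reflE α (reflE γ γ)) = reflE γ (k' • α - γ)
        rw [reflE_self (rs.inner_self_ne hγR), map_neg, hsαγ]
        congr 1
        abel
      -- evaluate zOf
      have hstep1 : H.zOf (γ :: l') = reflE γ * reflE α' := by
        have hc1 := (hecke_left_simple H hγ l' hl').1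
          (by rw [hz', reflE_symm, hsα'γ]; exact hpos2)
        rw [zOf_cons, hc1, hz']
      have hstep2 : H.zOf ((γ :: l') ++ [γ]) = (reflE γ * reflE α') * reflE γ := by
        rw [zOf_append_singleton, hstep1]
        apply (rs.hmul_eval H (rs.nice_mul (rs.nice_reflE hγR) (rs.nice_reflE hα'pos.1)) hγ).1
        show rs.IsPos (reflE γ (reflE α' γ))
        rw [hsα'γ, reflE_involutive]
        exact hpos1
      have : (γ :: l') ++ [γ] = γ :: l' ++ [γ] := by simp
      rw [← this, hstep2, hconj]
      ext x
      show reflE γ (reflE γ (reflE α (reflE γ (reflE γ x)))) = reflE α x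
      rw [reflE_involutive γ x, reflE_involutive γ]

lemma exists_word (H : HeckeData rs) {α : V} (hα : rs.IsPos α) :
    ∃ l : List V, (∀ γ ∈ l, γ ∈ rs.Δ) ∧ H.zOf l = reflE α :=
  rs.exists_word_aux H (rs.meas α) α hα le_rfl

end RootSystemData
/-- For `α` a positive root and `β` a simple root, `s_α · s_β = s_β · s_α`
(Hecke product) if and only if `(α, β) ≥ 0`. -/
theorem hecke_commute_iff_inner_nonneg
    {V : Type*} [NormedAddCommGroup V] [InnerProductSpace ℝ V]
    (rs : RootSystemData V) (H : HeckeData rs)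
    (α β : V) (hα : rs.IsPos α) (hβ : β ∈ rs.Δ) :
    H.hmul (reflE α) (reflE β) = H.hmul (reflE β) (reflE α) ↔ 0 ≤ ⟪α, β⟫ := by
  classical
  have hβR := rs.simple_mem β hβ
  have hβpos := rs.isPos_simple hβ
  have hαR := hα.1
  have hαα : (0:ℝ) < ⟪α, α⟫ := real_inner_self_pos' (rs.ne_zero α hαR)
  have hββ : (0:ℝ) < ⟪β, β⟫ := real_inner_self_pos' (rs.ne_zero β hβR)
  have hαnice := rs.nice_reflE hαR
  obtain ⟨l, hl, hz⟩ := rs.exists_word H hα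
  have hK := RootSystemData.hecke_left_simple H hβ l hl
  rw [hz, reflE_symm] at hK
  have hA := rs.hmul_eval H hαnice hβ
  have haβmem : reflE α β ∈ rs.R := rs.refl_mem α hαR β hβR
  set k : ℝ := 2 / ⟪α, α⟫ * ⟪α, β⟫ with hk
  have haβ : reflE α β = β - k • α := rs.reflE_apply_root hαR β
  constructor
  · -- forward: commutation implies nonnegativity
    intro heq
    by_contra hneg
    push_neg at hneg
    -- the condition `IsPos (reflE α β)` holds since k < 0
    have hkneg : k < 0 := by
      rw [hk]
      apply mul_neg_of_pos_of_neg
      · positivity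
      · exact hneg
    have hc : rs.IsPos (reflE α β) := by
      obtain ⟨_, cα, hcα0, hcα⟩ := hα
      obtain ⟨_, cβ, hcβ0, hcβ⟩ := hβpos
      refine ⟨haβmem, fun v => cβ v - k * cα v, fun v => ?_, ?_⟩
      · show 0 ≤ cβ v - k * cα v
        have h1 := hcβ0 v
        have h2 : 0 ≤ (-k) * cα v := mul_nonneg (by linarith) (hcα0 v)
        linarith
      · rw [haβ]
        conv_lhs => rw [hcβ, hcα]
        rw [Finset.smul_sum]
        simp only [smul_smul, sub_smul]
        rw [Finset.sum_sub_distrib]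
    rw [hA.1 hc, hK.1 hc] at heq
    -- heq : reflE α * reflE β = reflE β * reflE α ; derive proportionality
    have h1 : reflE (reflE α β) = reflE α * reflE β * (reflE α).symm :=
      reflE_conj (reflE_inner α) β
    rw [reflE_symm] at h1
    have h2 : reflE α * reflE β * reflE α = reflE β := by
      rw [heq, mul_assoc, reflE_mul_self, mul_one]
    have hvec : reflE (reflE α β) (reflE α β) = reflE β (reflE α β) := by
      rw [h1.trans h2]
    set k'' : ℝ := 2 / ⟪β, β⟫ * ⟪β, α⟫ with hk''
    have hvec' : -(β - k • α) = -β - k • (α - k'' • β) := by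
      have lhs : reflE (reflE α β) (reflE α β) = -(β - k • α) := by
        rw [reflE_self (rs.inner_self_ne haβmem), haβ]
      have rhs : reflE β (reflE α β) = -β - k • (α - k'' • β) := by
        rw [haβ, map_sub, map_smul, reflE_self (rs.inner_self_ne hβR),
          rs.reflE_apply_root hβR α]
      rw [← lhs, ← rhs]
      exact hvec
    have h3 : (2*k) • α = (k*k'') • β := by
      have h4 : -(β - k • α) - (-β - k • (α - k'' • β)) = 0 :=
        sub_eq_zero_of_eq hvec'
      have h5 : (2*k) • α - (k*k'') • β
          = -(β - k • α) - (-β - k • (α - k'' • β)) := by module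
      exact sub_eq_zero.mp (h5.trans h4)
    have h2k : (2*k) ≠ 0 := by linarith
    have h6 : α = ((2*k)⁻¹ * (k*k'')) • β := by
      rw [← smul_smul, ← h3, smul_smul, inv_mul_cancel₀ h2k, one_smul]
    have htpos : 0 < (2*k)⁻¹ * (k*k'') := rs.smul_pos_of_pos hα hβpos h6
    have : (0:ℝ) < ⟪α, β⟫ := by
      rw [h6, real_inner_smul_left]
      positivity
    linarith
  · -- backward
    intro hge
    rcases eq_or_lt_of_le hge with hzero | hpos
    · -- orthogonal case : reflections commute and both lengths increase
      have hzero' : ⟪α, β⟫ = (0:ℝ) := hzero.symm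
      have hk0 : k = 0 := by rw [hk, hzero', mul_zero]
      have haβ' : reflE α β = β := by rw [haβ, hk0, zero_smul, sub_zero]
      have hc : rs.IsPos (reflE α β) := by rw [haβ']; exact hβpos
      rw [hA.1 hc, hK.1 hc]
      -- commuting reflections
      have hβα : ⟪β, α⟫ = (0:ℝ) := by rw [real_inner_comm]; exact hzero'
      ext x
      show reflE α (reflE β x) = reflE β (reflE α x)
      rw [rs.reflE_apply_root hβR x, rs.reflE_apply_root hαR x,
        rs.reflE_apply_root hαR (x - (2 / ⟪β, β⟫ * ⟪β, x⟫) • β),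
        rs.reflE_apply_root hβR (x - (2 / ⟪α, α⟫ * ⟪α, x⟫) • α)]
      rw [inner_sub_right, inner_sub_right, real_inner_smul_right, real_inner_smul_right,
        hzero', hβα]
      simp only [mul_zero, zero_mul, sub_zero]
      module
    · by_cases hprop : ∃ t : ℝ, α = t • β
      · obtain ⟨t, ht⟩ := hprop
        have htpos : 0 < t := rs.smul_pos_of_pos hα hβpos ht
        have : reflE α = reflE β := by
          rw [ht, reflE_smul t htpos.ne' (rs.inner_self_ne hβR)]
        rw [this]
      · -- (α,β) > 0 and not proportional : reflE α β is negative, both products are s_α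
        push_neg at hprop
        have hkpos : 0 < k := by
          rw [hk]
          positivity
        obtain ⟨_, cα, hcα0, hcα⟩ := hα
        obtain ⟨δ₀, hδ₀, hδ₀ne, hδ₀pos⟩ := rs.exists_other_coeff hβ hcα0 hcα hprop
        have hβrep : β = ∑ v ∈ rs.Δ, (if v = β then (1:ℝ) else 0) • v := by
          simp [ite_smul, Finset.sum_ite_eq', hβ]
        have hrep : reflE α β
            = ∑ v ∈ rs.Δ, ((if v = β then (1:ℝ) else 0) - k * cα v) • v := by
          rw [haβ]
          conv_lhs => rw [hβrep, hcα]
          rw [Finset.smul_sum]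
          simp only [smul_smul, sub_smul]
          rw [Finset.sum_sub_distrib]
        have hcneg : ¬ rs.IsPos (reflE α β) := by
          apply rs.not_isPos_of_coeff_neg hrep hδ₀
          rw [if_neg hδ₀ne]
          have : 0 < k * cα δ₀ := mul_pos hkpos hδ₀pos
          linarith
        rw [hA.2 hcneg, hK.2 hcneg]
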